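/- Let p be an odd prime, l ≥ 1, q = p^l, and α, β ∈ F_{q^2} with γ = β + β^q. Suppose p_{α,β}(t) = t^{q+1} + α^q·t^q + α·t + γ has q+1 distinct roots σ_0, …, σ_q in F_{q^2}, and set P_k = Σ_{i=0}^{q} σ_i^k. Define b : {0,…,p−1} × {0,…,p−1} → F_{q^2} by b(u, v) = Σ_{n=0}^{min(u,v)} (−1)^{u+v−n} · C(u, n) · C(u+v−n, u) · α^{(u−n)q + v−n} · γ^n, where binomial coefficients are reduced into F_{q^2}. Then for all integers i, j with 0 ≤ i, j ≤ q−1, writing i = Σ_{h=0}^{l−1} i_h·p^h and j = Σ_{h=0}^{l−1} j_h·p^h in base p (digits i_h, j_h ∈ {0,…,p−1}), one has P_{jq+i} = Π_{h=0}^{l−1} b(i_h, j_h)^{p^h}. (This is the entrywise form of the identity expressing the q × q matrix (P_{jq+i})_{0≤i,j≤q−1} as the iterated Kronecker product B_1 ⊗ B_2 ⊗ ⋯ ⊗ B_l.) -/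

import Mathlib

open Finset Polynomial

set_option linter.unusedSectionVars false
set_option linter.unusedVariables false

lemma vandermonde_shift (U v n : ℕ) :
    ∑ b ∈ Finset.range (U + 1), U.choose b * v.choose (n + b) = (U + v).choose (n + U) := by
  rw [Nat.add_choose_eq, Finset.Nat.sum_antidiagonal_eq_sum_range_succ_mk]
  have hsub : Finset.range (U + 1) ⊆ Finset.range (n + U + 1) := by
    apply Finset.range_subset_range.2; omega
  rw [← Finset.sum_subset hsub (by
    intro x hx hx'
    simp only [Finset.mem_range] at hx hx'
    have : U < x := by omega
    rw [Nat.choose_eq_zero_of_lt this, Nat.zero_mul])]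
  rw [← Finset.sum_range_reflect (fun k => U.choose k * v.choose (n + U - k)) (U + 1)]
  apply Finset.sum_congr rfl
  intro b hb
  simp only [Finset.mem_range] at hb
  have h1 : U + 1 - 1 - b = U - b := by omega
  have h2 : n + U - (U - b) = n + b := by omega
  rw [h1, h2, Nat.choose_symm (by omega)]

lemma choose_triple (u v n : ℕ) (hnu : n ≤ u) (hnv : n ≤ v) :
    ∑ a ∈ Finset.Icc n (min u v), u.choose a * v.choose a * a.choose n
      = u.choose n * (u + v - n).choose u := by
  have step1 : ∀ a ∈ Finset.Icc n (min u v),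
      u.choose a * v.choose a * a.choose n = u.choose n * ((u - n).choose (a - n) * v.choose a) := by
    intro a ha
    simp only [Finset.mem_Icc] at ha
    have h := Nat.choose_mul (n := u) (k := a) (s := n) ha.1
    calc u.choose a * v.choose a * a.choose n = u.choose a * a.choose n * v.choose a := by ring
    _ = u.choose n * (u - n).choose (a - n) * v.choose a := by rw [h]
    _ = u.choose n * ((u - n).choose (a - n) * v.choose a) := by ring
  rw [Finset.sum_congr rfl step1, ← Finset.mul_sum]
  congr 1
  have hIco : Finset.Icc n (min u v) = Finset.Ico n (min u v + 1) := by
    rw [Finset.Ico_add_one_right_eq_Icc]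
  rw [hIco, Finset.sum_Ico_eq_sum_range]
  have hlen : min u v + 1 - n = min u v - n + 1 := by omega
  rw [hlen]
  have hsub : Finset.range (min u v - n + 1) ⊆ Finset.range (u - n + 1) := by
    apply Finset.range_subset_range.2; omega
  rw [Finset.sum_subset hsub (by
    intro x hx hx'
    simp only [Finset.mem_range] at hx hx'
    rcases le_or_gt u v with h | h
    · rw [min_eq_left h] at hx'
      rw [Nat.choose_eq_zero_of_lt (by omega), Nat.zero_mul]
    · rw [min_eq_right h.le] at hx'
      rw [Nat.choose_eq_zero_of_lt (n := v) (by omega), Nat.mul_zero])]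
  have : ∀ x ∈ Finset.range (u - n + 1),
      (u - n).choose (n + x - n) * v.choose (n + x) = (u - n).choose x * v.choose (n + x) := by
    intro x _; congr 2; omega
  rw [Finset.sum_congr rfl this, vandermonde_shift]
  have h1 : u - n + v = u + v - n := by omega
  have h2 : n + (u - n) = u := by omega
  rw [h1, h2]

section FieldOnly
variable {F : Type*} [Field F]

/-- auxiliary closed form -/
def Gaux (α c : F) (q i j : ℕ) : F :=
  (-1) ^ (i + j) * ∑ a ∈ Finset.range (min i j + 1),
    (i.choose a : F) * (j.choose a : F) * α ^ ((i - a) * q + (j - a)) * c ^ a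

lemma Gaux_eq_sum (α c : F) (q i j N : ℕ) (hN : min i j < N) :
    Gaux α c q i j = (-1) ^ (i + j) * ∑ a ∈ Finset.range N,
      (i.choose a : F) * (j.choose a : F) * α ^ ((i - a) * q + (j - a)) * c ^ a := by
  unfold Gaux
  congr 1
  apply Finset.sum_subset (Finset.range_subset_range.2 (by omega))
  intro x hx hx'
  simp only [Finset.mem_range] at hx hx'
  rcases le_or_gt i j with h | h
  · rw [Nat.choose_eq_zero_of_lt (n := i) (by omega)]; ring
  · rw [Nat.choose_eq_zero_of_lt (n := j) (by omega)]; ring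

lemma Gaux_eq_bsum (α γ : F) (q u v : ℕ) :
    Gaux α (α ^ (q + 1) - γ) q u v
      = ∑ n ∈ Finset.range (min u v + 1),
        (-1) ^ (u + v - n) * (u.choose n : F) * ((u + v - n).choose u : F) *
          α ^ ((u - n) * q + (v - n)) * γ ^ n := by
  set M := min u v + 1 with hM
  rw [Gaux]
  have hA : ∀ a ∈ Finset.range M,
      (u.choose a : F) * (v.choose a : F) * α ^ ((u - a) * q + (v - a)) * (α ^ (q + 1) - γ) ^ a
      = ∑ n ∈ Finset.range (a + 1),
          (u.choose a : F) * (v.choose a : F) * (a.choose n : F) *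
            ((-1) ^ n * γ ^ n * α ^ ((u - n) * q + (v - n))) := by
    intro a ha
    simp only [Finset.mem_range, hM] at ha
    have hau : a ≤ u := le_trans (by omega) (min_le_left u v)
    have hav : a ≤ v := le_trans (by omega) (min_le_right u v)
    have hsub : α ^ (q + 1) - γ = -γ + α ^ (q + 1) := by ring
    rw [hsub, add_pow, Finset.mul_sum]
    apply Finset.sum_congr rfl
    intro n hn
    simp only [Finset.mem_range] at hn
    have hna : n ≤ a := by omega
    have hexp : ((u - a) * q + (v - a)) + ((q + 1) * (a - n)) = (u - n) * q + (v - n) := by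
      have h1 : u - a + (a - n) = u - n := by omega
      have h2 : v - a + (a - n) = v - n := by omega
      calc ((u - a) * q + (v - a)) + ((q + 1) * (a - n))
          = ((u - a) + (a - n)) * q + ((v - a) + (a - n)) := by ring
      _ = (u - n) * q + (v - n) := by rw [h1, h2]
    rw [neg_pow, ← pow_mul, ← mul_assoc, ← hexp, pow_add]
    ring
  rw [Finset.sum_congr rfl hA]
  have hswap := Finset.sum_Ico_Ico_comm 0 M
    (fun n a => (u.choose a : F) * (v.choose a : F) * (a.choose n : F) *
      ((-1) ^ n * γ ^ n * α ^ ((u - n) * q + (v - n))))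
  simp only [← Finset.range_eq_Ico] at hswap
  have hswap2 : (∑ a ∈ Finset.range M, ∑ n ∈ Finset.range (a + 1),
      (u.choose a : F) * (v.choose a : F) * (a.choose n : F) *
      ((-1) ^ n * γ ^ n * α ^ ((u - n) * q + (v - n))))
      = ∑ n ∈ Finset.range M, ∑ a ∈ Finset.Ico n M,
      (u.choose a : F) * (v.choose a : F) * (a.choose n : F) *
      ((-1) ^ n * γ ^ n * α ^ ((u - n) * q + (v - n))) := by
    rw [← hswap]
  rw [hswap2]
  rw [Finset.mul_sum]
  apply Finset.sum_congr rfl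
  intro n hn
  simp only [Finset.mem_range, hM] at hn
  have hnu : n ≤ u := le_trans (by omega) (min_le_left u v)
  have hnv : n ≤ v := le_trans (by omega) (min_le_right u v)
  have hinner : (∑ a ∈ Finset.Ico n M,
      (u.choose a : F) * (v.choose a : F) * (a.choose n : F) *
      ((-1) ^ n * γ ^ n * α ^ ((u - n) * q + (v - n))))
      = ((u.choose n * (u + v - n).choose u : ℕ) : F) *
        ((-1) ^ n * γ ^ n * α ^ ((u - n) * q + (v - n))) := by
    rw [← Finset.sum_mul]
    congr 1
    rw [hM, Finset.Ico_add_one_right_eq_Icc, ← choose_triple u v n hnu hnv]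
    push_cast
    rfl
  rw [hinner]
  have hsgn : ((-1 : F)) ^ (u + v) * (-1) ^ n = (-1) ^ (u + v - n) := by
    rw [← pow_add, show u + v + n = (u + v - n) + 2 * n by omega, pow_add, pow_mul]
    simp
  push_cast
  calc (-1 : F) ^ (u + v) * ((u.choose n : F) * ((u + v - n).choose u : F) *
      ((-1) ^ n * γ ^ n * α ^ ((u - n) * q + (v - n))))
      = ((-1 : F) ^ (u + v) * (-1) ^ n) * ((u.choose n : F) * ((u + v - n).choose u : F) *
        (γ ^ n * α ^ ((u - n) * q + (v - n)))) := by ring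
  _ = _ := by rw [hsgn]; ring

end FieldOnly

section CharPPart
variable {F : Type*} [Field F] {p : ℕ} [Fact p.Prime] [CharP F p]

lemma natCast_pow_char (m : ℕ) : (m : F) ^ p = (m : F) := by
  have : (m : F) = (ZMod.castHom dvd_rfl F) (m : ZMod p) := by simp
  rw [this, ← map_pow, ZMod.pow_card]

lemma lucas_cast (i a : ℕ) :
    ((i.choose a : ℕ) : F) = ((i % p).choose (a % p) : F) * ((i / p).choose (a / p) : F) := by
  have h := Choose.choose_modEq_choose_mod_mul_choose_div_nat (n := i) (k := a) (p := p)
  have h2 : ((i.choose a : ℕ) : ZMod p)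
      = (((i % p).choose (a % p) * (i / p).choose (a / p) : ℕ) : ZMod p) :=
    (ZMod.natCast_eq_natCast_iff _ _ _).2 h
  have h3 := congrArg (ZMod.castHom dvd_rfl F) h2
  simpa using h3

lemma sum_range_mul_split (M : ℕ) (hp0 : 0 < p) (f : ℕ → F) :
    ∑ a ∈ Finset.range (p * M), f a
      = ∑ x ∈ Finset.range p ×ˢ Finset.range M, f (x.1 + p * x.2) := by
  apply Finset.sum_nbij' (i := fun a => (a % p, a / p)) (j := fun x => x.1 + p * x.2)
  · intro a ha
    simp only [Finset.mem_range, Finset.mem_product] at *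
    refine ⟨Nat.mod_lt _ hp0, (Nat.div_lt_iff_lt_mul hp0).2 ?_⟩
    rw [mul_comm]; omega
  · intro x hx
    simp only [Finset.mem_range, Finset.mem_product] at *
    obtain ⟨h1, h2⟩ := hx
    calc x.1 + p * x.2 < p + p * x.2 := by omega
    _ ≤ p * M := by nlinarith
  · intro a _; simp [Nat.mod_add_div]
  · intro x hx
    simp only [Finset.mem_range, Finset.mem_product] at hx
    obtain ⟨h1, h2⟩ := hx
    have e1 : (x.1 + p * x.2) % p = x.1 := by
      rw [Nat.add_mul_mod_self_left, Nat.mod_eq_of_lt h1]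
    have e2 : (x.1 + p * x.2) / p = x.2 := by
      rw [Nat.add_mul_div_left _ _ hp0, Nat.div_eq_of_lt h1]; omega
    simp [e1, e2]
  · intro a _; rw [Nat.mod_add_div]

lemma Gaux_step (α c : F) (q i j : ℕ) :
    Gaux α c q i j = Gaux α c q (i % p) (j % p) * (Gaux α c q (i / p) (j / p)) ^ p := by
  have hp0 : 0 < p := (Fact.out : p.Prime).pos
  set i0 := i % p with hi0
  set j0 := j % p with hj0
  set i' := i / p with hi'
  set j' := j / p with hj'
  have hii : i = i0 + p * i' := by rw [hi0, hi']; exact (Nat.mod_add_div i p).symm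
  have hjj : j = j0 + p * j' := by rw [hj0, hj']; exact (Nat.mod_add_div j p).symm
  have hi0p : i0 < p := Nat.mod_lt _ hp0
  have hj0p : j0 < p := Nat.mod_lt _ hp0
  rw [Gaux_eq_sum α c q i j (p * (i' + 1)) (lt_of_le_of_lt (min_le_left _ _) (by rw [Nat.mul_succ]; omega)),
    Gaux_eq_sum α c q i0 j0 p (lt_of_le_of_lt (min_le_left _ _) hi0p),
    Gaux_eq_sum α c q i' j' (i' + 1) (Nat.lt_succ_of_le (min_le_left _ _))]
  rw [sum_range_mul_split _ hp0, Finset.sum_product]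
  have hterm : ∀ a0 ∈ Finset.range p, ∀ a' ∈ Finset.range (i' + 1),
      ((i.choose (a0 + p * a') : ℕ) : F) * ((j.choose (a0 + p * a') : ℕ) : F) *
          α ^ ((i - (a0 + p * a')) * q + (j - (a0 + p * a'))) * c ^ (a0 + p * a')
        = ((i0.choose a0 : ℕ) : F) * ((j0.choose a0 : ℕ) : F) *
            α ^ ((i0 - a0) * q + (j0 - a0)) * c ^ a0 *
          (((i'.choose a' : ℕ) : F) * ((j'.choose a' : ℕ) : F) *
            α ^ ((i' - a') * q + (j' - a')) * c ^ a') ^ p := by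
    intro a0 h0 a' h'
    simp only [Finset.mem_range] at h0 h'
    have hlucas_i : ((i.choose (a0 + p * a') : ℕ) : F)
        = ((i0.choose a0 : ℕ) : F) * ((i'.choose a' : ℕ) : F) := by
      have h := lucas_cast (F := F) (p := p) i (a0 + p * a')
      rw [Nat.add_mul_mod_self_left, Nat.mod_eq_of_lt h0,
        Nat.add_mul_div_left _ _ hp0, Nat.div_eq_of_lt h0] at h
      simpa using h
    have hlucas_j : ((j.choose (a0 + p * a') : ℕ) : F)
        = ((j0.choose a0 : ℕ) : F) * ((j'.choose a' : ℕ) : F) := by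
      have h := lucas_cast (F := F) (p := p) j (a0 + p * a')
      rw [Nat.add_mul_mod_self_left, Nat.mod_eq_of_lt h0,
        Nat.add_mul_div_left _ _ hp0, Nat.div_eq_of_lt h0] at h
      simpa using h
    rw [hlucas_i, hlucas_j]
    rw [mul_pow, mul_pow, mul_pow, natCast_pow_char, natCast_pow_char, ← pow_mul, ← pow_mul]
    by_cases hgood : a0 ≤ i0 ∧ a0 ≤ j0 ∧ a' ≤ i' ∧ a' ≤ j'
    · obtain ⟨h1, h2, h3, h4⟩ := hgood
      have hE : (i - (a0 + p * a')) * q + (j - (a0 + p * a'))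
          = ((i0 - a0) * q + (j0 - a0)) + (((i' - a') * q + (j' - a')) * p) := by
        have m1 : p * (i' - a') = p * i' - p * a' := Nat.mul_sub ..
        have m2 : p * (j' - a') = p * j' - p * a' := Nat.mul_sub ..
        have m3 : p * a' ≤ p * i' := Nat.mul_le_mul_left p h3
        have m4 : p * a' ≤ p * j' := Nat.mul_le_mul_left p h4
        have e1 : i - (a0 + p * a') = (i0 - a0) + p * (i' - a') := by omega
        have e2 : j - (a0 + p * a') = (j0 - a0) + p * (j' - a') := by omega
        rw [e1, e2]; ring
      have hc : (a0 + p * a') = a0 + a' * p := by ring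
      rw [hE, hc, pow_add, pow_add]
      ring
    · rcases Nat.lt_or_ge i0 a0 with h | h
      · rw [Nat.choose_eq_zero_of_lt h]; push_cast; ring
      rcases Nat.lt_or_ge j0 a0 with h2 | h2
      · rw [Nat.choose_eq_zero_of_lt h2]; push_cast; ring
      rcases Nat.lt_or_ge i' a' with h3 | h3
      · rw [Nat.choose_eq_zero_of_lt h3]; push_cast; ring
      rcases Nat.lt_or_ge j' a' with h4 | h4
      · rw [Nat.choose_eq_zero_of_lt h4]; push_cast; ring
      exact absurd ⟨h, h2, h3, h4⟩ hgood
  have key : (∑ a0 ∈ Finset.range p, ∑ a' ∈ Finset.range (i' + 1),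
      ((i.choose (a0 + p * a') : ℕ) : F) * ((j.choose (a0 + p * a') : ℕ) : F) *
          α ^ ((i - (a0 + p * a')) * q + (j - (a0 + p * a'))) * c ^ (a0 + p * a'))
      = (∑ a0 ∈ Finset.range p, ((i0.choose a0 : ℕ) : F) * ((j0.choose a0 : ℕ) : F) *
            α ^ ((i0 - a0) * q + (j0 - a0)) * c ^ a0) *
        (∑ a' ∈ Finset.range (i' + 1), ((i'.choose a' : ℕ) : F) * ((j'.choose a' : ℕ) : F) *
            α ^ ((i' - a') * q + (j' - a')) * c ^ a') ^ p := by
    rw [sum_pow_char, Finset.sum_mul_sum]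
    exact Finset.sum_congr rfl fun a0 h0 => Finset.sum_congr rfl fun a' h' => hterm a0 h0 a' h'
  rw [key, mul_pow, ← pow_mul]
  have hsign : ((-1 : F)) ^ (i + j) = (-1) ^ (i0 + j0) * (-1) ^ ((i' + j') * p) := by
    rw [← pow_add]
    congr 1
    have : (i' + j') * p = p * i' + p * j' := by ring
    omega
  rw [hsign]
  ring

lemma Gaux_zero (α c : F) (q : ℕ) : Gaux α c q 0 0 = 1 := by
  simp [Gaux]

lemma Gaux_prod (α c : F) (q : ℕ) : ∀ n (i j : ℕ), i < p ^ n → j < p ^ n →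
    Gaux α c q i j
      = ∏ h ∈ Finset.range n, (Gaux α c q (i / p ^ h % p) (j / p ^ h % p)) ^ p ^ h := by
  intro n
  induction n with
  | zero =>
    intro i j hi hj
    simp only [pow_zero, Nat.lt_one_iff] at hi hj
    subst hi; subst hj
    simp [Gaux_zero]
  | succ n ih =>
    intro i j hi hj
    have hp0 : 0 < p := (Fact.out : p.Prime).pos
    have hi' : i / p < p ^ n := by
      rw [Nat.div_lt_iff_lt_mul hp0, ← pow_succ]; exact hi
    have hj' : j / p < p ^ n := by
      rw [Nat.div_lt_iff_lt_mul hp0, ← pow_succ]; exact hj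
    rw [Gaux_step (p := p), ih _ _ hi' hj', Finset.prod_range_succ']
    rw [mul_comm]
    congr 1
    · rw [← Finset.prod_pow]
      apply Finset.prod_congr rfl
      intro h _
      rw [← pow_mul, ← pow_succ]
      congr 3 <;> rw [Nat.div_div_eq_div_mul, ← pow_succ']
    · simp

end CharPPart

/-- Lemma 7 (entrywise Kronecker-product identity): writing `i` and `j` in base `p`
with digits `i_h, j_h`, the power sums of the `q+1` distinct roots of `p_{α,β}` satisfy
`P_{jq+i} = Π_{h=0}^{l-1} b(i_h, j_h)^(p^h)`, where
`b(u,v) = Σ_{n=0}^{min(u,v)} (-1)^(u+v-n) C(u,n) C(u+v-n,u) α^((u-n)q+v-n) γ^n`. -/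
theorem powerSum_kronecker (p l q : ℕ) (hp : p.Prime) (hodd : Odd p) (hl : 1 ≤ l)
    (hq : q = p ^ l) (F : Type*) [Field F] [Fintype F] (hF : Fintype.card F = q ^ 2)
    (α β : F) (σ : Fin (q + 1) → F) (hσinj : Function.Injective σ)
    (hσroot : ∀ i, (σ i) ^ (q + 1) + α ^ q * (σ i) ^ q + α * (σ i) + (β + β ^ q) = 0)
    (b : ℕ → ℕ → F)
    (hb : ∀ u v, u ≤ p - 1 → v ≤ p - 1 →
      b u v = ∑ n ∈ Finset.range (min u v + 1),
        (-1) ^ (u + v - n) * (u.choose n : F) * ((u + v - n).choose u : F) *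
          α ^ ((u - n) * q + (v - n)) * (β + β ^ q) ^ n) :
    ∀ i j : ℕ, i ≤ q - 1 → j ≤ q - 1 →
      (∑ m, σ m ^ (j * q + i)) =
        ∏ h ∈ Finset.range l, (b (i / p ^ h % p) (j / p ^ h % p)) ^ (p ^ h) := by
  classical
  haveI : Fact p.Prime := ⟨hp⟩
  have hp0 : 0 < p := hp.pos
  have hq2 : 2 ≤ q := by
    rw [hq]
    calc 2 ≤ p := hp.two_le
    _ = p ^ 1 := (pow_one p).symm
    _ ≤ p ^ l := Nat.pow_le_pow_right (by omega) hl
  -- characteristic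
  haveI hchar : CharP F p := by
    obtain ⟨r, hr⟩ := CharP.exists F
    haveI := hr
    have hrprime : r.Prime := CharP.char_is_prime F r
    have hdvd : r ∣ q ^ 2 := by
      rw [← hF]
      exact (CharP.cast_eq_zero_iff F r (Fintype.card F)).1 (FiniteField.cast_card_eq_zero F)
    have hrp : r = p := by
      have h1 : r ∣ p ^ (l * 2) := by
        rw [hq, ← pow_mul] at hdvd; exact hdvd
      exact (Nat.prime_dvd_prime_iff_eq hrprime hp).1 (hrprime.dvd_of_dvd_pow h1)
    rwa [hrp] at hr
  set γ := β + β ^ q with hγ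
  set c := α ^ (q + 1) - γ with hc
  set τ : Fin (q + 1) → F := fun m => σ m + α ^ q with hτdef
  have hfrobq : ∀ x y : F, (x + y) ^ q = x ^ q + y ^ q := by
    intro x y; rw [hq]; exact add_pow_char_pow x y p l
  have hxcard : ∀ x : F, x ^ (q * q) = x := by
    intro x
    have := FiniteField.pow_card x
    rwa [hF, pow_two] at this
  have hτpow : ∀ m, (τ m) ^ q = σ m ^ q + α := by
    intro m
    show (σ m + α ^ q) ^ q = σ m ^ q + α
    rw [hfrobq, ← pow_mul, hxcard]
  have hτ : ∀ m, (τ m) ^ (q + 1) = c := by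
    intro m
    rw [pow_succ, hτpow]
    have h := hσroot m
    show (σ m ^ q + α) * (σ m + α ^ q) = α ^ (q + 1) - γ
    linear_combination h
  have hτinj : Function.Injective τ := by
    intro a b h
    exact hσinj (by simpa [hτdef] using h)
  have hcne : c ≠ 0 := by
    intro h0
    have hz : ∀ m, τ m = 0 := by
      intro m
      have := hτ m
      rw [h0] at this
      exact pow_eq_zero_iff (by omega) |>.1 this
    have h01 : (⟨0, by omega⟩ : Fin (q + 1)) = ⟨1, by omega⟩ := by
      apply hτinj
      rw [hz, hz]
    simp [Fin.ext_iff] at h01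
  -- vanishing of power sums
  have hS0 : ∀ k, ¬ (q + 1) ∣ k → (∑ m, τ m ^ k) = 0 := by
    intro k hk
    obtain ⟨g, hg⟩ := IsCyclic.exists_generator (α := Fˣ)
    have hgord : orderOf g = q ^ 2 - 1 := by
      rw [orderOf_eq_card_of_forall_mem_zpowers hg, Nat.card_units,
        Nat.card_eq_fintype_card, hF]
    obtain ⟨t, ht⟩ := Nat.exists_eq_add_of_le hq2
    have hqfact : q ^ 2 - 1 = (q - 1) * (q + 1) := by
      subst ht
      have e1 : (2 + t) ^ 2 = t * t + 4 * t + 4 := by ring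
      have e2 : (2 + t - 1) * (2 + t + 1) = t * t + 4 * t + 3 := by
        have : 2 + t - 1 = t + 1 := by omega
        rw [this]; ring
      omega
    have hζord : orderOf (g ^ (q - 1)) = q + 1 := by
      rw [orderOf_pow, hgord]
      have h1 : Nat.gcd (q ^ 2 - 1) (q - 1) = q - 1 :=
        Nat.gcd_eq_right ⟨q + 1, hqfact⟩
      rw [h1, hqfact, Nat.mul_div_cancel_left _ (by omega)]
    set ζ : F := ((g ^ (q - 1) : Fˣ) : F) with hζ
    have hζ1 : ζ ^ (q + 1) = 1 := by
      rw [hζ, ← Units.val_pow_eq_pow_val, ← hζord, pow_orderOf_eq_one, Units.val_one]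
    have hζk : ζ ^ k ≠ 1 := by
      intro h1
      apply hk
      rw [← hζord]
      apply orderOf_dvd_of_pow_eq_one
      exact Units.ext (by rw [Units.val_pow_eq_pow_val, ← hζ, h1, Units.val_one])
    have hζne : ζ ≠ 0 := Units.ne_zero _
    set T : Finset F := Finset.image τ Finset.univ with hT
    have hTmem : ∀ x, x ∈ T → x ^ (q + 1) = c := by
      intro x hx
      rw [hT, Finset.mem_image] at hx
      obtain ⟨m, _, rfl⟩ := hx
      exact hτ m
    have hTcard : T.card = q + 1 := by
      rw [hT, Finset.card_image_of_injective _ hτinj, Finset.card_univ, Fintype.card_fin]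
    have hall : ∀ x : F, x ^ (q + 1) = c → x ∈ T := by
      intro x hx
      have hsub : T ⊆ (Polynomial.nthRoots (q + 1) c).toFinset := by
        intro y hy
        rw [Multiset.mem_toFinset, Polynomial.mem_nthRoots (by omega)]
        exact hTmem y hy
      have hcard2 : (Polynomial.nthRoots (q + 1) c).toFinset.card ≤ T.card := by
        rw [hTcard]
        exact (Multiset.toFinset_card_le _).trans (by simpa using Polynomial.card_nthRoots (q + 1) c)
      have heq := Finset.eq_of_subset_of_card_le hsub hcard2
      rw [heq, Multiset.mem_toFinset, Polynomial.mem_nthRoots (by omega)]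
      exact hx
    have hsum : (∑ m, τ m ^ k) = ∑ x ∈ T, x ^ k := by
      rw [hT, Finset.sum_image (fun a _ b _ h => hτinj h)]
    have hstep0 : (∑ x ∈ T, (ζ * x) ^ k) = ∑ x ∈ T, x ^ k := by
      apply Finset.sum_nbij' (i := fun x => ζ * x) (j := fun x => ζ⁻¹ * x)
      · intro x hx
        apply hall
        rw [mul_pow, hζ1, one_mul]
        exact hTmem x hx
      · intro x hx
        apply hall
        rw [mul_pow, inv_pow, hζ1, inv_one, one_mul]
        exact hTmem x hx
      · intro x _; field_simp
      · intro x _; field_simp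
      · intro x _; rfl
    have hstep : (∑ x ∈ T, x ^ k) = ζ ^ k * ∑ x ∈ T, x ^ k := by
      rw [Finset.mul_sum, ← hstep0]
      apply Finset.sum_congr rfl
      intro x _
      rw [mul_pow]
    have hzero : (1 - ζ ^ k) * (∑ x ∈ T, x ^ k) = 0 := by
      linear_combination hstep
    rcases mul_eq_zero.1 hzero with h | h
    · exact absurd (by linear_combination -h) hζk
    · rw [hsum]; exact h
  have hSd : ∀ a : ℕ, (∑ m, τ m ^ ((q + 1) * a)) = c ^ a := by
    intro a
    have h1 : ∀ m : Fin (q + 1), τ m ^ ((q + 1) * a) = c ^ a := by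
      intro m
      rw [pow_mul, hτ]
    rw [Finset.sum_congr rfl (fun m _ => h1 m), Finset.sum_const, Finset.card_univ,
      Fintype.card_fin, nsmul_eq_mul]
    have hq0 : ((q : ℕ) : F) = 0 := by
      rw [hq]
      push_cast
      rw [CharP.cast_eq_zero F p]
      exact zero_pow (by omega)
    push_cast
    rw [hq0]
    ring
  have hS : ∀ a e : ℕ, a ≤ q - 1 → e ≤ q - 1 →
      (∑ m, τ m ^ (q * a + e)) = if a = e then c ^ a else 0 := by
    intro a e ha he
    by_cases hae : a = e
    · subst hae
      have h2 : q * a + a = (q + 1) * a := by ring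
      rw [if_pos rfl, h2, hSd]
    · rw [if_neg hae]
      apply hS0
      intro hdvd
      rcases Nat.lt_or_ge a e with h | h
      · have h1 : q * a + e = (q + 1) * a + (e - a) := by
          have : (q + 1) * a = q * a + a := by ring
          omega
        rw [h1] at hdvd
        have h2 : (q + 1) ∣ (e - a) := (Nat.dvd_add_right ⟨a, rfl⟩).1 hdvd
        have h3 := Nat.le_of_dvd (by omega) h2
        omega
      · have h1 : (q + 1) ∣ (q + 1) * a := ⟨a, rfl⟩
        have h2 : (q + 1) * a - (q * a + e) = a - e := by
          have : (q + 1) * a = q * a + a := by ring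
          omega
        have h3 : (q + 1) ∣ (a - e) := by
          rw [← h2]
          exact Nat.dvd_sub h1 hdvd
        have h4 := Nat.le_of_dvd (by omega) h3
        omega
  -- main computation
  intro i j hi hj
  have hG : (∑ m, σ m ^ (j * q + i)) = Gaux α c q i j := by
    have hexpand : ∀ t : F, (t ^ q + (-α)) ^ j * (t + (-α ^ q)) ^ i
        = ∑ a ∈ Finset.range (j + 1), ∑ e ∈ Finset.range (i + 1),
            ((j.choose a : F) * (i.choose e : F) * (-α) ^ (j - a) * (-α ^ q) ^ (i - e)) *
              t ^ (q * a + e) := by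
      intro t
      rw [add_pow, add_pow, Finset.sum_mul_sum]
      apply Finset.sum_congr rfl
      intro a _
      apply Finset.sum_congr rfl
      intro e _
      rw [pow_add, pow_mul]
      ring
    have hterm : ∀ m : Fin (q + 1), σ m ^ (j * q + i)
        = ∑ a ∈ Finset.range (j + 1), ∑ e ∈ Finset.range (i + 1),
            ((j.choose a : F) * (i.choose e : F) * (-α) ^ (j - a) * (-α ^ q) ^ (i - e)) *
              τ m ^ (q * a + e) := by
      intro m
      rw [← hexpand (τ m)]
      have hσm : σ m = τ m + (-α ^ q) := by
        show σ m = (σ m + α ^ q) + (-α ^ q); ring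
      have hσq : σ m ^ q = τ m ^ q + (-α) := by
        have h := hτpow m
        linear_combination -h
      rw [pow_add, pow_mul']
      rw [hσq]
      rw [hσm]
    rw [Finset.sum_congr rfl (fun m _ => hterm m)]
    rw [Finset.sum_comm]
    have hswap : ∀ a ∈ Finset.range (j + 1),
        (∑ m : Fin (q + 1), ∑ e ∈ Finset.range (i + 1),
          ((j.choose a : F) * (i.choose e : F) * (-α) ^ (j - a) * (-α ^ q) ^ (i - e)) *
            τ m ^ (q * a + e))
        = ∑ e ∈ Finset.range (i + 1),
            ((j.choose a : F) * (i.choose e : F) * (-α) ^ (j - a) * (-α ^ q) ^ (i - e)) *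
              (if a = e then c ^ a else 0) := by
      intro a ha
      simp only [Finset.mem_range] at ha
      rw [Finset.sum_comm]
      apply Finset.sum_congr rfl
      intro e he
      simp only [Finset.mem_range] at he
      rw [← Finset.mul_sum, hS a e (by omega) (by omega)]
    rw [Finset.sum_congr rfl hswap]
    have hcollapse : ∀ a ∈ Finset.range (j + 1),
        (∑ e ∈ Finset.range (i + 1),
          ((j.choose a : F) * (i.choose e : F) * (-α) ^ (j - a) * (-α ^ q) ^ (i - e)) *
            (if a = e then c ^ a else 0))
        = if a ∈ Finset.range (i + 1) then
            ((j.choose a : F) * (i.choose a : F) * (-α) ^ (j - a) * (-α ^ q) ^ (i - a)) * c ^ a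
          else 0 := by
      intro a _
      rw [← Finset.sum_ite_eq (Finset.range (i + 1)) a
        (fun e => ((j.choose a : F) * (i.choose e : F) * (-α) ^ (j - a) * (-α ^ q) ^ (i - e)) * c ^ a)]
      apply Finset.sum_congr rfl
      intro e _
      by_cases h : a = e
      · subst h; simp
      · rw [if_neg h, if_neg h, mul_zero]
    rw [Finset.sum_congr rfl hcollapse, Finset.sum_ite_mem]
    have hinter : Finset.range (j + 1) ∩ Finset.range (i + 1) = Finset.range (min i j + 1) := by
      ext x; simp only [Finset.mem_inter, Finset.mem_range]; omega
    rw [hinter, Gaux, Finset.mul_sum]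
    apply Finset.sum_congr rfl
    intro a ha
    simp only [Finset.mem_range] at ha
    have hai : a ≤ i := le_trans (by omega) (min_le_left i j)
    have haj : a ≤ j := le_trans (by omega) (min_le_right i j)
    rw [neg_pow α, neg_pow (α ^ q), ← pow_mul]
    have hsgn : ((-1 : F)) ^ (j - a) * (-1) ^ (i - a) = (-1) ^ (i + j) := by
      have h2 : i + j = (j - a) + (i - a) + 2 * a := by omega
      rw [h2, pow_add, pow_add, pow_mul, neg_one_sq, one_pow, mul_one]
    have hae : q * (i - a) = (i - a) * q := by ring
    calc (j.choose a : F) * (i.choose a : F) * ((-1) ^ (j - a) * α ^ (j - a)) *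
          ((-1) ^ (i - a) * α ^ (q * (i - a))) * c ^ a
        = ((-1 : F) ^ (j - a) * (-1) ^ (i - a)) *
          ((i.choose a : F) * (j.choose a : F) * (α ^ (q * (i - a)) * α ^ (j - a)) * c ^ a) := by ring
    _ = _ := by
      rw [hsgn, hae, ← pow_add]

  rw [hG, Gaux_prod (p := p) α c q l i j (by rw [← hq]; omega) (by rw [← hq]; omega)]
  apply Finset.prod_congr rfl
  intro h _
  congr 1
  have hu : i / p ^ h % p ≤ p - 1 := by
    have := Nat.mod_lt (i / p ^ h) hp0
    omega
  have hv : j / p ^ h % p ≤ p - 1 := by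
    have := Nat.mod_lt (j / p ^ h) hp0
    omega
  rw [hb _ _ hu hv, hc]
  exact Gaux_eq_bsum α γ q _ _
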